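/- arXiv:2204.08233 — 3 statements merged into one kernel-verified Lean document; each statement's English description precedes it below -/
import Mathlib

section
/- Let A be a commutative ring with only finitely many maximal ideals, let M be an A-module, and let N be a finitely generated A-module. If an A-linear map f : M → N induces a surjection M/𝔪M → N/𝔪N for every maximal ideal 𝔪 of A, then f is surjective. -/
lemma semilocal_aux {A : Type*} [CommRing A] {M N : Type*} [AddCommGroup M] [Module A M]
    [AddCommGroup N] [Module A N] (f : M →ₗ[A] N) (s : Finset (Ideal A))
    (hs : ∀ 𝔪 ∈ s, LinearMap.range f ⊔ 𝔪 • (⊤ : Submodule A N) = ⊤) :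
    LinearMap.range f ⊔ (s.prod id) • (⊤ : Submodule A N) = ⊤ := by
  classical
  induction s using Finset.induction_on with
  | empty => simp
  | @insert a t ha ih =>
    rw [Finset.prod_insert ha]
    have ht : LinearMap.range f ⊔ (t.prod id) • (⊤ : Submodule A N) = ⊤ :=
      ih fun 𝔪 h𝔪 => hs 𝔪 (Finset.mem_insert_of_mem h𝔪)
    have hat : LinearMap.range f ⊔ a • (⊤ : Submodule A N) = ⊤ :=
      hs a (Finset.mem_insert_self a t)
    have : (id a : Ideal A) • (⊤ : Submodule A N)
        ≤ LinearMap.range f ⊔ (id a * t.prod id) • (⊤ : Submodule A N) := by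
      conv_lhs => rw [← ht]
      rw [Submodule.smul_sup, mul_smul]
      exact sup_le (le_trans (Submodule.smul_le_right) le_sup_left) le_sup_right
    refine le_antisymm le_top ?_
    calc (⊤ : Submodule A N) = LinearMap.range f ⊔ a • (⊤ : Submodule A N) := hat.symm
      _ ≤ LinearMap.range f ⊔ (id a * t.prod id) • (⊤ : Submodule A N) :=
        sup_le le_sup_left this

/-- **Nakayama-type surjectivity criterion over semilocal rings.**
If `A` is a commutative ring with only finitely many maximal ideals, `N` is a finitely
generated `A`-module, and an `A`-linear map `f : M → N` induces a surjection
`M/𝔪M → N/𝔪N` for every maximal ideal `𝔪` (equivalently, `range f + 𝔪N = N`),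
then `f` is surjective. -/
theorem semilocal_surjective_of_surjective_mod_maximal
    {A : Type*} [CommRing A] {M N : Type*} [AddCommGroup M] [Module A M]
    [AddCommGroup N] [Module A N]
    (hsemilocal : {I : Ideal A | I.IsMaximal}.Finite)
    (hN : Module.Finite A N) (f : M →ₗ[A] N)
    (h : ∀ 𝔪 : Ideal A, 𝔪.IsMaximal →
      LinearMap.range f ⊔ 𝔪 • (⊤ : Submodule A N) = ⊤) :
    Function.Surjective f := by
  classical
  set s := hsemilocal.toFinset with hsdef
  set J : Ideal A := s.prod id with hJ
  have hprod : LinearMap.range f ⊔ J • (⊤ : Submodule A N) = ⊤ :=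
    semilocal_aux f s fun 𝔪 h𝔪 => h 𝔪 (hsemilocal.mem_toFinset.mp h𝔪)
  have hJjac : J ≤ Ideal.jacobson ⊥ := by
    rw [Ideal.jacobson]
    refine le_sInf fun 𝔪 h𝔪 => ?_
    refine le_trans Ideal.prod_le_inf (Finset.inf_le ?_)
    exact hsemilocal.mem_toFinset.mpr h𝔪.2
  have htop : (⊤ : Submodule A N) ≤ LinearMap.range f :=
    Submodule.le_of_le_smul_of_le_jacobson_bot
      (Module.Finite.fg_top (R := A) (M := N)) hJjac (le_of_eq hprod.symm)
  rw [← LinearMap.range_eq_top]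
  exact le_antisymm le_top htop
end

section
/- Let A be a commutative ring with finitely many maximal ideals and let B be an A-algebra that is finitely generated as an A-module. If b₁, …, b_d ∈ B are elements whose images generate B ⊗_A A/𝔪 as an A/𝔪-algebra for every maximal ideal 𝔪 of A, then b₁, …, b_d generate B as an A-algebra. -/
/-- If `A` is a commutative ring with finitely many maximal ideals and `B` is an
`A`-algebra that is finitely generated as an `A`-module, and `b₁, …, b_d ∈ B` have
images generating `B/𝔪B` as an algebra over `A/𝔪` (equivalently, over `A`) for every
maximal ideal `𝔪` of `A`, then the `bᵢ` generate `B` as an `A`-algebra. -/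
theorem semilocal_adjoin_eq_top_of_adjoin_mod_maximal_eq_top
    {A B : Type*} [CommRing A] [CommRing B] [Algebra A B]
    (hsemilocal : {I : Ideal A | I.IsMaximal}.Finite)
    (hB : Module.Finite A B) {d : ℕ} (b : Fin d → B)
    (h : ∀ 𝔪 : Ideal A, 𝔪.IsMaximal →
      Algebra.adjoin A
        (Set.range fun i => Ideal.Quotient.mk (Ideal.map (algebraMap A B) 𝔪) (b i)) = ⊤) :
    Algebra.adjoin A (Set.range b) = ⊤ := by
  haveI := hB
  set C := Algebra.adjoin A (Set.range b) with hC
  set N := Subalgebra.toSubmodule C with hN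
  -- Step 1: for each maximal ideal 𝔪, N ⊔ 𝔪 • ⊤ = ⊤
  have key : ∀ 𝔪 : Ideal A, 𝔪.IsMaximal → N ⊔ 𝔪 • (⊤ : Submodule A B) = ⊤ := by
    intro 𝔪 h𝔪
    set I := Ideal.map (algebraMap A B) 𝔪 with hI
    have hmap : C.map (Ideal.Quotient.mkₐ A I) = ⊤ := by
      rw [hC, AlgHom.map_adjoin, ← Set.range_comp]
      exact h 𝔪 h𝔪
    rw [eq_top_iff]
    intro x _
    have hx : Ideal.Quotient.mkₐ A I x ∈ C.map (Ideal.Quotient.mkₐ A I) := by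
      rw [hmap]; trivial
    obtain ⟨c, hc, hcx⟩ := hx
    have hxc : x - c ∈ I := by
      rw [← Ideal.Quotient.eq]
      exact (hcx).symm
    refine Submodule.mem_sup.mpr ⟨c, hc, x - c, ?_, by ring⟩
    rw [Ideal.smul_top_eq_map]
    exact hxc
  -- Step 2: pass to the quotient module M = B ⧸ N
  set M := B ⧸ N with hM
  have hfg : (⊤ : Submodule A M).FG := Module.Finite.fg_top
  have hann : ∀ 𝔪 : Ideal A, 𝔪.IsMaximal → ∃ r : A, r - 1 ∈ 𝔪 ∧ ∀ m : M, r • m = 0 := by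
    intro 𝔪 h𝔪
    have htop : (⊤ : Submodule A M) ≤ 𝔪 • ⊤ := by
      have : Submodule.map N.mkQ (N ⊔ 𝔪 • ⊤) = 𝔪 • (⊤ : Submodule A M) := by
        rw [Submodule.map_sup, Submodule.mkQ_map_self, Submodule.map_smul'',
          Submodule.map_top, Submodule.range_mkQ, bot_sup_eq]
      rw [← this, key 𝔪 h𝔪, Submodule.map_top, Submodule.range_mkQ]
    obtain ⟨r, hr1, hr2⟩ :=
      Submodule.exists_sub_one_mem_and_smul_eq_zero_of_fg_of_le_smul 𝔪 ⊤ hfg htop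
    exact ⟨r, hr1, fun m => hr2 m trivial⟩
  -- Step 3: the annihilator of M is the whole ring, hence M = 0
  have hJ : (⊤ : Submodule A M).annihilator = ⊤ := by
    by_contra hne
    obtain ⟨𝔪, h𝔪, hle⟩ := Ideal.exists_le_maximal _ hne
    obtain ⟨r, hr1, hr2⟩ := hann 𝔪 h𝔪
    have hrJ : r ∈ (⊤ : Submodule A M).annihilator :=
      Submodule.mem_annihilator.mpr fun n _ => hr2 n
    have h1 : (1 : A) ∈ 𝔪 := by
      have := 𝔪.sub_mem (hle hrJ) hr1
      simpa using this
    exact h𝔪.ne_top (𝔪.eq_top_iff_one.mpr h1)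
  have hsub : Subsingleton M := by
    refine subsingleton_of_forall_eq 0 fun m => ?_
    have h1 : (1 : A) ∈ (⊤ : Submodule A M).annihilator := hJ ▸ Submodule.mem_top
    have := Submodule.mem_annihilator.mp h1 m trivial
    simpa using this
  have hNtop : N = ⊤ := (Submodule.Quotient.subsingleton_iff).mp hsub
  exact Algebra.toSubmodule_eq_top.mp hNtop
end

section
/- Let R be a commutative ring. Let S ⊂ R[t] be the multiplicative set of monic polynomials, and let R′ = R[x]_{1 + xR[x]} be the localization of R[x] at the multiplicative set 1 + xR[x]. Then the assignment t ↦ x⁻¹ induces a ring isomorphism S⁻¹R[t] ≅ R′[1/x]. -/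
open Polynomial

/-- The multiplicative set of monic polynomials in `R[t]`. -/
def monicSubmonoid (R : Type*) [CommRing R] : Submonoid (Polynomial R) where
  carrier := {f | f.Monic}
  one_mem' := monic_one
  mul_mem' := fun hf hg => hf.mul hg

/-- The multiplicative set `1 + x·R[x]` in `R[x]`. -/
def onePlusXMulSubmonoid (R : Type*) [CommRing R] : Submonoid (Polynomial R) where
  carrier := {f | ∃ g : Polynomial R, f = 1 + X * g}
  one_mem' := ⟨0, by ring⟩
  mul_mem' := by
    rintro a b ⟨g, rfl⟩ ⟨h, rfl⟩
    exact ⟨g + h + X * g * h, by ring⟩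

namespace LocAtInfinityAux

theorem mem_onePlusX_of_coeff_zero {R : Type*} [CommRing R] {f : Polynomial R}
    (h : f.coeff 0 = 1) : f ∈ onePlusXMulSubmonoid R :=
  ⟨f.divX, by nth_rewrite 1 [← X_mul_divX_add f]; rw [h, C_1, add_comm]⟩

theorem reflect_reflect {R : Type*} [CommRing R] (N : ℕ) (f : Polynomial R) :
    reflect N (reflect N f) = f := by
  ext i
  simp [coeff_reflect, revAt_invol]

theorem natDegree_reflect_le {R : Type*} [CommRing R] {N : ℕ} {f : Polynomial R}
    (h : f.natDegree ≤ N) : (reflect N f).natDegree ≤ N := by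
  rw [natDegree_le_iff_coeff_eq_zero]
  intro i hi
  rw [coeff_reflect, revAt_eq_self_of_lt hi]
  exact coeff_eq_zero_of_natDegree_lt (lt_of_le_of_lt h hi)

theorem eval_key {R B : Type*} [CommRing R] [CommRing B] (g : Polynomial R →+* B)
    [Invertible (g X)] (f : Polynomial R) (N : ℕ) (hN : f.natDegree ≤ N) :
    eval₂ (g.comp C) (⅟ (g X)) f * (g X) ^ N = g (reflect N f) := by
  have h := eval₂_reflect_mul_pow (g.comp C) (g X) N (reflect N f) (natDegree_reflect_le hN)
  rw [reflect_reflect] at h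
  rw [h, ← hom_eval₂, eval₂_C_X]

end LocAtInfinityAux

open LocAtInfinityAux

/-- **Localization of `R[t]` at monic polynomials as the localization at infinity.**
Inverting the monic polynomials in `R[t]` yields the same ring as localizing `R[x]` at
`1 + xR[x]` and then inverting `x`: the assignment `t ↦ x⁻¹` induces a ring
isomorphism `S⁻¹R[t] ≅ (R[x]_{1+xR[x]})[1/x]`, the latter being the localization of
`R[x]` at the submonoid generated by `1 + xR[x]` and the powers of `x`. -/
theorem localization_monic_iso_localization_at_infinity (R : Type*) [CommRing R] :
    ∃ e : Localization (monicSubmonoid R) ≃+*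
        Localization (onePlusXMulSubmonoid R ⊔ Submonoid.powers (X : Polynomial R)),
      (∀ r : R,
        e (algebraMap (Polynomial R) (Localization (monicSubmonoid R)) (C r)) =
          algebraMap (Polynomial R)
            (Localization (onePlusXMulSubmonoid R ⊔ Submonoid.powers (X : Polynomial R)))
            (C r)) ∧
      e (algebraMap (Polynomial R) (Localization (monicSubmonoid R)) X) *
          algebraMap (Polynomial R)
            (Localization (onePlusXMulSubmonoid R ⊔ Submonoid.powers (X : Polynomial R)))
            X = 1 := by
  classical
  set S : Submonoid (Polynomial R) := monicSubmonoid R with hSdef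
  set T : Submonoid (Polynomial R) :=
    onePlusXMulSubmonoid R ⊔ Submonoid.powers (X : Polynomial R) with hTdef
  have hXS : (X : Polynomial R) ∈ S := monic_X
  have hXT : (X : Polynomial R) ∈ T :=
    SetLike.le_def.mp le_sup_right (Submonoid.mem_powers X)
  letI : Invertible (algebraMap (Polynomial R) (Localization S) X) :=
    (IsLocalization.map_units (Localization S) (⟨X, hXS⟩ : S)).invertible
  letI : Invertible (algebraMap (Polynomial R) (Localization T) X) :=
    (IsLocalization.map_units (Localization T) (⟨X, hXT⟩ : T)).invertible
  set φ : Polynomial R →+* Localization T :=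
    eval₂RingHom ((algebraMap (Polynomial R) (Localization T)).comp C)
      (⅟ (algebraMap (Polynomial R) (Localization T) X)) with hφdef
  set χ : Polynomial R →+* Localization S :=
    eval₂RingHom ((algebraMap (Polynomial R) (Localization S)).comp C)
      (⅟ (algebraMap (Polynomial R) (Localization S) X)) with hχdef
  -- key identities
  have keyφ : ∀ (f : Polynomial R),
      φ f * (algebraMap (Polynomial R) (Localization T) X) ^ f.natDegree =
        algebraMap (Polynomial R) (Localization T) (reflect f.natDegree f) := fun f =>
    eval_key (algebraMap (Polynomial R) (Localization T)) f f.natDegree le_rfl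
  have keyχ : ∀ (f : Polynomial R),
      χ f * (algebraMap (Polynomial R) (Localization S) X) ^ f.natDegree =
        algebraMap (Polynomial R) (Localization S) (reflect f.natDegree f) := fun f =>
    eval_key (algebraMap (Polynomial R) (Localization S)) f f.natDegree le_rfl
  have hφC : ∀ r : R, φ (C r) = algebraMap (Polynomial R) (Localization T) (C r) := by
    intro r; simp [hφdef]
  have hχC : ∀ r : R, χ (C r) = algebraMap (Polynomial R) (Localization S) (C r) := by
    intro r; simp [hχdef]
  have hφX : φ X = ⅟ (algebraMap (Polynomial R) (Localization T) X) := by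
    simp [hφdef]
  have hχX : χ X = ⅟ (algebraMap (Polynomial R) (Localization S) X) := by
    simp [hχdef]
  -- φ sends monic polynomials to units
  have hφunits : ∀ s : S, IsUnit (φ s) := by
    rintro ⟨f, hf⟩
    have hf' : f.Monic := hf
    have hmem : reflect f.natDegree f ∈ T := by
      refine SetLike.le_def.mp le_sup_left (mem_onePlusX_of_coeff_zero ?_)
      rw [coeff_reflect, revAt_le (Nat.zero_le _), Nat.sub_zero]
      exact hf'
    have hunit : IsUnit (φ f * (algebraMap (Polynomial R) (Localization T) X) ^ f.natDegree) := by
      rw [keyφ f]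
      exact IsLocalization.map_units (Localization T) (⟨_, hmem⟩ : T)
    exact isUnit_of_mul_isUnit_left hunit
  -- χ sends T to units
  have hχunits : ∀ s : T, IsUnit (χ s) := by
    rintro ⟨f, hfT⟩
    rw [hTdef] at hfT
    rcases Submonoid.mem_sup.mp hfT with ⟨a, ha, b, hb, rfl⟩
    rw [map_mul]
    refine IsUnit.mul ?_ ?_
    · obtain ⟨g, rfl⟩ := ha
      have hcoeff : (1 + X * g).coeff 0 = 1 := by
        simp [coeff_one, mul_coeff_zero]
      have hmono : (reflect (1 + X * g).natDegree (1 + X * g)).Monic := by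
        refine monic_of_natDegree_le_of_coeff_eq_one _ (natDegree_reflect_le le_rfl) ?_
        rw [coeff_reflect, revAt_le le_rfl, Nat.sub_self]
        exact hcoeff
      have hunit : IsUnit (χ (1 + X * g) *
          (algebraMap (Polynomial R) (Localization S) X) ^ (1 + X * g).natDegree) := by
        rw [keyχ]
        exact IsLocalization.map_units (Localization S) (⟨_, hmono⟩ : S)
      exact isUnit_of_mul_isUnit_left hunit
    · obtain ⟨n, rfl⟩ := hb
      rw [map_pow, hχX]
      exact (isUnit_of_invertible _).pow n
  -- the two lifts
  set ψ : Localization S →+* Localization T := IsLocalization.lift hφunits with hψdef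
  set ψ' : Localization T →+* Localization S := IsLocalization.lift hχunits with hψ'def
  have hψalg : ∀ f : Polynomial R, ψ (algebraMap (Polynomial R) (Localization S) f) = φ f :=
    fun f => IsLocalization.lift_eq hφunits f
  have hψ'alg : ∀ f : Polynomial R, ψ' (algebraMap (Polynomial R) (Localization T) f) = χ f :=
    fun f => IsLocalization.lift_eq hχunits f
  -- ψ' ∘ ψ = id
  have h1 : ψ'.comp ψ = RingHom.id (Localization S) := by
    refine IsLocalization.ringHom_ext S ?_
    rw [RingHom.comp_assoc]
    refine Polynomial.ringHom_ext (fun r => ?_) ?_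
    · simp only [RingHom.comp_apply, RingHom.id_apply]
      rw [hψalg, hφC, hψ'alg, hχC]
    · simp only [RingHom.comp_apply, RingHom.id_apply]
      rw [hψalg, hφX]
      have hmul : ψ' (⅟ (algebraMap (Polynomial R) (Localization T) X)) *
          ψ' (algebraMap (Polynomial R) (Localization T) X) = 1 := by
        rw [← map_mul, invOf_mul_self, map_one]
      rw [hψ'alg, hχX] at hmul
      calc ψ' (⅟ (algebraMap (Polynomial R) (Localization T) X))
          = ψ' (⅟ (algebraMap (Polynomial R) (Localization T) X)) *
              (⅟ (algebraMap (Polynomial R) (Localization S) X) *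
                algebraMap (Polynomial R) (Localization S) X) := by
            rw [invOf_mul_self, mul_one]
        _ = (ψ' (⅟ (algebraMap (Polynomial R) (Localization T) X)) *
              ⅟ (algebraMap (Polynomial R) (Localization S) X)) *
                algebraMap (Polynomial R) (Localization S) X := by ring
        _ = algebraMap (Polynomial R) (Localization S) X := by rw [hmul, one_mul]
  -- ψ ∘ ψ' = id
  have h2 : ψ.comp ψ' = RingHom.id (Localization T) := by
    refine IsLocalization.ringHom_ext T ?_
    rw [RingHom.comp_assoc]
    refine Polynomial.ringHom_ext (fun r => ?_) ?_
    · simp only [RingHom.comp_apply, RingHom.id_apply]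
      rw [hψ'alg, hχC, hψalg, hφC]
    · simp only [RingHom.comp_apply, RingHom.id_apply]
      rw [hψ'alg, hχX]
      have hmul : ψ (⅟ (algebraMap (Polynomial R) (Localization S) X)) *
          ψ (algebraMap (Polynomial R) (Localization S) X) = 1 := by
        rw [← map_mul, invOf_mul_self, map_one]
      rw [hψalg, hφX] at hmul
      calc ψ (⅟ (algebraMap (Polynomial R) (Localization S) X))
          = ψ (⅟ (algebraMap (Polynomial R) (Localization S) X)) *
              (⅟ (algebraMap (Polynomial R) (Localization T) X) *
                algebraMap (Polynomial R) (Localization T) X) := by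
            rw [invOf_mul_self, mul_one]
        _ = (ψ (⅟ (algebraMap (Polynomial R) (Localization S) X)) *
              ⅟ (algebraMap (Polynomial R) (Localization T) X)) *
                algebraMap (Polynomial R) (Localization T) X := by ring
        _ = algebraMap (Polynomial R) (Localization T) X := by rw [hmul, one_mul]
  refine ⟨RingEquiv.ofRingHom ψ ψ' h2 h1, fun r => ?_, ?_⟩
  · show ψ (algebraMap (Polynomial R) (Localization S) (C r)) = _
    rw [hψalg, hφC]
  · show ψ (algebraMap (Polynomial R) (Localization S) X) *
      algebraMap (Polynomial R) (Localization T) X = 1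
    rw [hψalg, hφX, invOf_mul_self]
end
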